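/- Let τ ∈ ℂ lie in the fundamental region, let λ > 0 with e^{iλ} ≠ 1, e^{iλ(τ-1)} ≠ 1 and e^{iλ(τ+1)} ≠ 1, and let K ≥ 1 be an integer. Then Σ_{n=1}^{K} ( ½ e^{iλ(nτ - n)} + Σ_{m=-n+1}^{n-1} e^{iλ(nτ + m)} + ½ e^{iλ(nτ + n)} ) = 2 e^{iτλ} f₂(τ,λ) − 2 e^{iτλ(K+1)} f₂^{(K)}(τ,λ), where f₂^{(K)}(τ,λ) = ¼ ((1 + e^{iλ})/(1 − e^{iλ})) [ e^{-iλ(K+1)}/(1 − e^{iλ(τ-1)}) − e^{iλ(K+1)}/(1 − e^{iλ(τ+1)}) ]. -/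

import Mathlib

section QuadrantSumAux

set_option maxHeartbeats 1000000 in
private lemma quadrant_geom_Icc_int (q : ℂ) (hq : q ≠ 0) (a : ℤ) : ∀ b : ℤ, a ≤ b →
    (q - 1) * ∑ m ∈ Finset.Icc a b, q ^ m = q ^ (b + 1) - q ^ a := by
  refine Int.le_induction ?_ ?_
  · rw [Finset.Icc_self, Finset.sum_singleton, zpow_add₀ hq, zpow_one]; ring
  · intro b hb ih
    have hins : Finset.Icc a (b + 1) = insert (b + 1) (Finset.Icc a b) := by
      ext x; simp only [Finset.mem_Icc, Finset.mem_insert]; omega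
    rw [hins, Finset.sum_insert (by simp), mul_add, ih, zpow_add₀ hq (b+1) 1,
      zpow_one, zpow_add₀ hq b 1, zpow_one]
    ring

set_option maxHeartbeats 1000000 in
private lemma quadrant_alg_id (q z A B : ℂ) (hq0 : q ≠ 0) (hq1 : q - 1 ≠ 0)
    (ha : z * q - 1 ≠ 0) (hb : z * q⁻¹ - 1 ≠ 0) (hA : A ≠ 0) :
    (q + 1) / (2 * (q - 1)) *
        ((B * A - z * q) / (z * q - 1) - (B * A⁻¹ - z * q⁻¹) / (z * q⁻¹ - 1)) =
      2 * z * ((1/2 + (q + q⁻¹)/2/2) / ((1 - z*q) * (1 - z*q⁻¹))) -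
        2 * B * (1/4 * ((1 + q) / (1 - q)) * (A⁻¹ / (1 - z*q⁻¹) - A / (1 - z*q))) := by
  have hzq : z - q ≠ 0 := by
    intro h
    apply hb
    rw [sub_eq_zero] at h
    rw [h, mul_inv_cancel₀ hq0, sub_self]
  have hqz : q - z ≠ 0 := fun h => hzq (by linear_combination -h)
  have h1q : (1:ℂ) - q ≠ 0 := fun h => hq1 (by linear_combination -h)
  have ha' : (1:ℂ) - z * q ≠ 0 := fun h => ha (by linear_combination -h)
  have hAz : A * (z - q) ≠ 0 := mul_ne_zero hA hzq
  have hAq : A * (q - z) ≠ 0 := mul_ne_zero hA hqz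
  have w1 : (B * A⁻¹ - z * q⁻¹) / (z * q⁻¹ - 1) = (B * q - z * A) / (A * (z - q)) := by
    rw [div_eq_div_iff hb hAz]
    field_simp
  have w2 : (1/2 : ℂ) + (q + q⁻¹)/2/2 = (q + 1)^2 / (4*q) := by
    field_simp; ring
  have w3 : (1:ℂ) - z * q⁻¹ = (q - z) / q := by field_simp
  have u1 : A⁻¹ / ((q - z)/q) = q / (A * (q - z)) := by
    rw [div_eq_div_iff (div_ne_zero hqz hq0) hAq]
    field_simp
  have t1 : 2 * z * ((q+1)^2/(4*q) / ((1 - z*q) * ((q - z)/q)))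
      = (z * (q+1)^2) / (2 * ((1 - z*q) * (q - z))) := by
    field_simp
    ring
  rw [w1, w2, w3]
  rw [div_sub_div (B*A - z*q) (B*q - z*A) ha hAz]
  rw [div_mul_div_comm]
  rw [t1, u1]
  rw [div_sub_div q A hAq ha']
  rw [div_mul_div_comm]
  rw [div_mul_div_comm]
  rw [← mul_div_assoc]
  rw [div_sub_div _ _ (mul_ne_zero two_ne_zero (mul_ne_zero ha' hqz))
      (mul_ne_zero (mul_ne_zero (by norm_num : (4:ℂ) ≠ 0) h1q) (mul_ne_zero hAq ha'))]
  rw [div_eq_div_iff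
      (mul_ne_zero (mul_ne_zero two_ne_zero hq1) (mul_ne_zero ha hAz))
      (mul_ne_zero (mul_ne_zero two_ne_zero (mul_ne_zero ha' hqz))
        (mul_ne_zero (mul_ne_zero (by norm_num : (4:ℂ) ≠ 0) h1q) (mul_ne_zero hAq ha')))]
  ring

end QuadrantSumAux

/-- `f₂(τ,λ) = cos²(λ/2)/(1 − 2e^{iτλ}cos(λ) + e^{2iτλ})`. -/
noncomputable def f2 (τ : ℂ) (l : ℝ) : ℂ :=
  Complex.cos ((l : ℂ) / 2) ^ 2 /
    (1 - 2 * Complex.exp (Complex.I * τ * (l : ℂ)) * Complex.cos (l : ℂ) +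
      Complex.exp (2 * Complex.I * τ * (l : ℂ)))

/-- `f₂^{(K)}(τ,λ) = ¼ ((1+e^{iλ})/(1−e^{iλ})) [ e^{-iλ(K+1)}/(1−e^{iλ(τ-1)}) − e^{iλ(K+1)}/(1−e^{iλ(τ+1)}) ]`. -/
noncomputable def f2K (τ : ℂ) (l : ℝ) (K : ℕ) : ℂ :=
  (1 / 4 : ℂ) * ((1 + Complex.exp (Complex.I * (l : ℂ))) / (1 - Complex.exp (Complex.I * (l : ℂ)))) *
    (Complex.exp (-(Complex.I * (l : ℂ) * ((K : ℂ) + 1))) /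
        (1 - Complex.exp (Complex.I * (l : ℂ) * (τ - 1))) -
      Complex.exp (Complex.I * (l : ℂ) * ((K : ℂ) + 1)) /
        (1 - Complex.exp (Complex.I * (l : ℂ) * (τ + 1))))

set_option maxHeartbeats 2000000 in
/-- **Corollary 2.3, second identity.** For `τ` in the fundamental region, `λ > 0`
avoiding the (removable) degeneracies, and `K ≥ 1`,
`Σ_{n=1}^{K} ( ½ e^{iλ(nτ-n)} + Σ_{m=-n+1}^{n-1} e^{iλ(nτ+m)} + ½ e^{iλ(nτ+n)} )
  = 2 e^{iτλ} f₂(τ,λ) − 2 e^{iτλ(K+1)} f₂^{(K)}(τ,λ)`. -/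
theorem quadrant_sum_f2 (τ : ℂ) (hτ1 : -(1 / 2 : ℝ) < τ.re) (hτ2 : τ.re ≤ 1 / 2)
    (hτ3 : 0 < τ.im) (hτ4 : 1 ≤ ‖τ‖)
    (hτ5 : ‖τ‖ = 1 → 0 ≤ τ.re)
    (l : ℝ) (hl : 0 < l)
    (h1 : Complex.exp (Complex.I * (l : ℂ)) ≠ 1)
    (h2 : Complex.exp (Complex.I * (l : ℂ) * (τ - 1)) ≠ 1)
    (h3 : Complex.exp (Complex.I * (l : ℂ) * (τ + 1)) ≠ 1)
    (K : ℕ) (hK : 1 ≤ K) :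
    ∑ n ∈ Finset.Icc 1 K,
        ((1 / 2 : ℂ) * Complex.exp (Complex.I * (l : ℂ) * ((n : ℂ) * τ - (n : ℂ))) +
          ∑ m ∈ Finset.Icc (-(n : ℤ) + 1) ((n : ℤ) - 1),
            Complex.exp (Complex.I * (l : ℂ) * ((n : ℂ) * τ + (m : ℂ))) +
          (1 / 2 : ℂ) * Complex.exp (Complex.I * (l : ℂ) * ((n : ℂ) * τ + (n : ℂ)))) =
      2 * Complex.exp (Complex.I * τ * (l : ℂ)) * f2 τ l -
        2 * Complex.exp (Complex.I * τ * (l : ℂ) * ((K : ℂ) + 1)) * f2K τ l K := by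
  set q := Complex.exp (Complex.I * (l : ℂ)) with hqdef
  set z := Complex.exp (Complex.I * (l : ℂ) * τ) with hzdef
  have hq0 : q ≠ 0 := Complex.exp_ne_zero _
  have hz0 : z ≠ 0 := Complex.exp_ne_zero _
  have hq1 : q - 1 ≠ 0 := sub_ne_zero.mpr h1
  have hzq : z * q = Complex.exp (Complex.I * (l : ℂ) * (τ + 1)) := by
    rw [hzdef, hqdef, ← Complex.exp_add]; congr 1; ring
  have hzqi : z * q⁻¹ = Complex.exp (Complex.I * (l : ℂ) * (τ - 1)) := by
    rw [hzdef, hqdef, ← Complex.exp_neg, ← Complex.exp_add]; congr 1; ring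
  have hzq1 : z * q ≠ 1 := by rw [hzq]; exact h3
  have hzqi1 : z * q⁻¹ ≠ 1 := by rw [hzqi]; exact h2
  -- Step 1: per-term closed form
  have hterm : ∀ n ∈ Finset.Icc 1 K,
      ((1 / 2 : ℂ) * Complex.exp (Complex.I * (l : ℂ) * ((n : ℂ) * τ - (n : ℂ))) +
        ∑ m ∈ Finset.Icc (-(n : ℤ) + 1) ((n : ℤ) - 1),
          Complex.exp (Complex.I * (l : ℂ) * ((n : ℂ) * τ + (m : ℂ))) +
        (1 / 2 : ℂ) * Complex.exp (Complex.I * (l : ℂ) * ((n : ℂ) * τ + (n : ℂ))))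
      = (q + 1) / (2 * (q - 1)) * ((z * q) ^ n - (z * q⁻¹) ^ n) := by
    intro n hn
    have hn1 : 1 ≤ n := (Finset.mem_Icc.mp hn).1
    have hab : (-(n:ℤ) + 1) ≤ (n:ℤ) - 1 := by omega
    have key := quadrant_geom_Icc_int q hq0 (-(n:ℤ)+1) ((n:ℤ)-1) hab
    have hz1 : q ^ (-(n:ℤ)+1) = q * (q^n)⁻¹ := by
      rw [zpow_add₀ hq0, zpow_one, zpow_neg, zpow_natCast]; ring
    rw [show ((n:ℤ)-1)+1 = (n:ℤ) from by ring, zpow_natCast, hz1] at key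
    have e1 : Complex.exp (Complex.I*(l:ℂ)*((n:ℂ)*τ - (n:ℂ))) = z^n * (q^n)⁻¹ := by
      rw [show Complex.I*(l:ℂ)*((n:ℂ)*τ-(n:ℂ))
          = (n:ℂ)*(Complex.I*(l:ℂ)*τ) + (n:ℂ)*(-(Complex.I*(l:ℂ))) from by ring,
        Complex.exp_add, Complex.exp_nat_mul, Complex.exp_nat_mul, Complex.exp_neg, inv_pow]
    have e3 : Complex.exp (Complex.I*(l:ℂ)*((n:ℂ)*τ + (n:ℂ))) = z^n * q^n := by
      rw [show Complex.I*(l:ℂ)*((n:ℂ)*τ+(n:ℂ))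
          = (n:ℂ)*(Complex.I*(l:ℂ)*τ) + (n:ℂ)*(Complex.I*(l:ℂ)) from by ring,
        Complex.exp_add, Complex.exp_nat_mul, Complex.exp_nat_mul]
    have e2 : ∀ m : ℤ, Complex.exp (Complex.I*(l:ℂ)*((n:ℂ)*τ + (m:ℂ))) = z^n * q^m := by
      intro m
      rw [show Complex.I*(l:ℂ)*((n:ℂ)*τ+(m:ℂ))
          = (n:ℂ)*(Complex.I*(l:ℂ)*τ) + (m:ℂ)*(Complex.I*(l:ℂ)) from by ring,
        Complex.exp_add, Complex.exp_nat_mul, Complex.exp_int_mul]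
    rw [e1, e3]
    simp_rw [e2]
    rw [← Finset.mul_sum, mul_pow, mul_pow, inv_pow]
    have hqn : q ^ n ≠ 0 := pow_ne_zero _ hq0
    have hS : ∑ m ∈ Finset.Icc (-(n:ℤ)+1) ((n:ℤ)-1), q ^ m
        = (q^n - q * (q^n)⁻¹) / (q - 1) :=
      eq_div_of_mul_eq hq1 (by rw [mul_comm]; exact key)
    rw [hS]
    field_simp
    ring
  rw [Finset.sum_congr rfl hterm, ← Finset.mul_sum]
  -- Step 2: geometric sums
  rw [← Finset.Ico_add_one_right_eq_Icc, Finset.sum_sub_distrib,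
    geom_sum_Ico hzq1 (by omega), geom_sum_Ico hzqi1 (by omega)]
  -- Step 3: rewrite the right-hand side
  rw [f2, f2K]
  have r1 : Complex.exp (Complex.I * τ * (l:ℂ)) = z := by
    rw [hzdef]; congr 1; ring
  have r2 : Complex.exp (2 * Complex.I * τ * (l:ℂ)) = z * z := by
    rw [hzdef, ← Complex.exp_add]; congr 1; ring
  have r3 : Complex.exp (Complex.I * τ * (l:ℂ) * ((K:ℂ) + 1)) = z ^ (K+1) := by
    rw [hzdef, ← Complex.exp_nat_mul]; congr 1; push_cast; ring
  have r4 : Complex.exp (-(Complex.I * (l:ℂ) * ((K:ℂ) + 1))) = (q ^ (K+1))⁻¹ := by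
    rw [hqdef, ← Complex.exp_nat_mul, ← Complex.exp_neg]; congr 1; push_cast; ring
  have r5 : Complex.exp (Complex.I * (l:ℂ) * ((K:ℂ) + 1)) = q ^ (K+1) := by
    rw [hqdef, ← Complex.exp_nat_mul]; congr 1; push_cast; ring
  have rc : Complex.cos (l:ℂ) = (q + q⁻¹) / 2 := by
    rw [Complex.cos, hqdef, ← Complex.exp_neg]
    congr 2 <;> ring
  have rc2 : Complex.cos ((l:ℂ)/2) ^ 2 = 1/2 + (q + q⁻¹)/2/2 := by
    rw [Complex.cos_sq, show 2*((l:ℂ)/2) = (l:ℂ) from by ring, rc]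
  rw [r1, r2, r3, r4, r5, rc, rc2, ← hzq, ← hzqi]
  -- Step 4: pure field identity
  have hD : 1 - 2*z*((q + q⁻¹)/2) + z*z = (1 - z*q) * (1 - z*q⁻¹) := by
    field_simp; ring
  rw [hD, ← hqdef]
  simp only [mul_pow, inv_pow, pow_one]
  exact quadrant_alg_id q z (q^(K+1)) (z^(K+1)) hq0 hq1
    (sub_ne_zero.mpr hzq1) (sub_ne_zero.mpr hzqi1) (pow_ne_zero _ hq0)
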